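/- (Equivariance of the caloron one-form under Aut(Q).) Let P be a manifold with free right Aut(Q)-action, A an Aut(Q)-connection one-form on P with values in Lie(Aut(Q)) = Γ_G(Q,TQ) (G-equivariant vector fields on Q), and Φ: P → 𝒜 a Higgs field valued in connection one-forms on Q satisfying Φ(pψ) = ψ*Φ(p). Define the g-valued one-form on P × Q by ω̃_{(p,q)}(ξ,ζ) = Φ(p)_q(A_p(ξ)(q) + ζ). Then ω̃ is invariant under the diagonal right Aut(Q)-action (ψ acting on P by the bundle action and on Q by ψ⁻¹): R_ψ* ω̃ = ω̃. -/
import Mathlib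


/-- Equivariance of the caloron one-form under `Aut(Q)`. With
`ω̃_{(p,q)}(ξ,ζ) = Φ(p)_q(A_p(ξ)(q) + ζ)`, the diagonal right `Aut(Q)`-action
(`ψ` acting on `P` by the bundle action and on `Q` by `ψ⁻¹`) satisfies
`R_ψ* ω̃ = ω̃`. Tangent spaces of `Q` and `P` are trivialized by `W` and `U`. -/
theorem caloron_form_aut_invariant
    {Ψ Q P : Type*} [Group Ψ]
    {W U gV : Type*} [AddCommGroup W] [Module ℝ W]
    [AddCommGroup U] [Module ℝ U] [AddCommGroup gV] [Module ℝ gV]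
    -- the action of `Aut(Q)` on `Q` and its pushforward data
    (a : Ψ →* Equiv.Perm Q)
    (D : Ψ → Q → (W →ₗ[ℝ] W))
    (hD1 : ∀ q, D 1 q = LinearMap.id)
    (hDmul : ∀ ψ₁ ψ₂ q, D (ψ₁ * ψ₂) q = D ψ₁ (a ψ₂ q) ∘ₗ D ψ₂ q)
    -- the free right `Aut(Q)`-action on `P` and its pushforward data
    (actP : P → Ψ → P)
    (hactP_one : ∀ p, actP p 1 = p)
    (hactP_mul : ∀ p ψ₁ ψ₂, actP (actP p ψ₁) ψ₂ = actP p (ψ₁ * ψ₂))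
    (hfree : ∀ p ψ, actP p ψ = p → ψ = 1)
    (DR : Ψ → P → (U →ₗ[ℝ] U))
    -- `A`: a connection one-form valued in `Lie(Aut Q) = Γ_G(Q,TQ)` (vector fields)
    (A : P → (U →ₗ[ℝ] (Q → W)))
    (hAconn : ∀ (ψ : Ψ) (p : P) (ξ : U) (q : Q),
      A (actP p ψ) (DR ψ p ξ) q = D ψ⁻¹ (a ψ q) (A p ξ (a ψ q)))
    -- `Φ`: a Higgs field valued in connection one-forms on `Q`, `Φ(pψ) = ψ*Φ(p)`
    (Φ : P → Q → (W →ₗ[ℝ] gV))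
    (hΦ : ∀ (ψ : Ψ) (p : P) (q : Q),
      Φ (actP p ψ) q = Φ p (a ψ q) ∘ₗ D ψ q) :
    ∀ (ψ : Ψ) (p : P) (q : Q) (ξ : U) (ζ : W),
      Φ (actP p ψ) (a ψ⁻¹ q)
          (A (actP p ψ) (DR ψ p ξ) (a ψ⁻¹ q) + D ψ⁻¹ q ζ)
        = Φ p q (A p ξ q + ζ) := by
  intro ψ p q ξ ζ
  have haq : a ψ (a ψ⁻¹ q) = q := by
    simpa using congrFun (congrArg (fun e => (Equiv.Perm.mul_apply · q)) (mul_inv_cancel ψ)) rfl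
  have hA : A (actP p ψ) (DR ψ p ξ) (a ψ⁻¹ q) = D ψ⁻¹ q (A p ξ q) := by
    rw [hAconn ψ p ξ (a ψ⁻¹ q), haq]
  have hid : D ψ (a ψ⁻¹ q) ∘ₗ D ψ⁻¹ q = LinearMap.id := by
    rw [← hDmul ψ ψ⁻¹ q, mul_inv_cancel, hD1]
  rw [hΦ ψ p (a ψ⁻¹ q), haq, hA, ← map_add (D ψ⁻¹ q)]
  have := congrArg (Φ p q) (LinearMap.congr_fun hid (A p ξ q + ζ))
  simpa using this
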